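/- Let X = [0,1] ∪ [2,3], let f_1(x) = x² on [0,1] and f_1(x) = (x−2)^{1/2} + 2 on [2,3], let f_2(x) = x+2 on [0,1] and f_2(x) = x−2 on [2,3], and let F = Γ(f_1) ∪ Γ(f_2). Then the Mahavier dynamical system (X_F^+, σ_F^+) is not transitive. -/

import Mathlib

open Set

/-- `X = [0,1] ∪ [2,3]`. -/
def XS : Set ℝ := Icc 0 1 ∪ Icc 2 3

/-- `f₁(x) = x²` on `[0,1]`, `f₁(x) = (x-2)^{1/2} + 2` on `[2,3]`. -/
noncomputable def f₁ (x : ℝ) : ℝ := if x ≤ 1 then x ^ 2 else Real.sqrt (x - 2) + 2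

/-- `f₂(x) = x + 2` on `[0,1]`, `f₂(x) = x - 2` on `[2,3]`. -/
noncomputable def f₂ (x : ℝ) : ℝ := if x ≤ 1 then x + 2 else x - 2

/-- `F = Γ(f₁) ∪ Γ(f₂)` as a relation on `X`. -/
noncomputable def Frel : Set (ℝ × ℝ) :=
  {p | p.1 ∈ XS ∧ (p.2 = f₁ p.1 ∨ p.2 = f₂ p.1)}

/-- The Mahavier product `X_F^+`. -/
def MahavierPlus (F : Set (ℝ × ℝ)) : Set (ℕ → ℝ) :=
  {x | ∀ i : ℕ, (x i, x (i + 1)) ∈ F}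

/-- The shift map on sequences. -/
def shiftMap (x : ℕ → ℝ) : ℕ → ℝ := fun i => x (i + 1)

/-- Reduction map collapsing `[2,3]` onto `[0,1]`. -/
noncomputable def rr (x : ℝ) : ℝ := if x ≤ 1 then x else x - 2

lemma rr_step {p q : ℝ} (h : (p, q) ∈ Frel) :
    rr q = (rr p) ^ 2 ∨ rr p = (rr q) ^ 2 ∨ rr q = rr p := by
  obtain ⟨hp, hq⟩ := h
  rcases hp with hp | hp
  · -- p ∈ [0,1]
    obtain ⟨hp0, hp1⟩ := hp
    have hrp : rr p = p := if_pos hp1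
    rcases hq with hq | hq
    · -- q = f₁ p = p^2
      left
      have : q = p ^ 2 := by simpa [f₁, hp1] using hq
      have hq1 : q ≤ 1 := by nlinarith
      rw [rr, if_pos hq1, this, hrp]
    · -- q = f₂ p = p + 2
      right; right
      have : q = p + 2 := by simpa [f₂, hp1] using hq
      have hq1 : ¬ q ≤ 1 := by simp [this]; nlinarith
      rw [rr, if_neg hq1, this, hrp]; ring
  · -- p ∈ [2,3]
    obtain ⟨hp2, hp3⟩ := hp
    have hp1 : ¬ p ≤ 1 := by linarith
    have hrp : rr p = p - 2 := if_neg hp1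
    rcases hq with hq | hq
    · -- q = √(p-2) + 2
      right; left
      have hqq : q = Real.sqrt (p - 2) + 2 := by simpa [f₁, hp1] using hq
      have hq1 : ¬ q ≤ 1 := by
        have := Real.sqrt_nonneg (p - 2); rw [hqq]; push_neg; linarith
      have hrq : rr q = Real.sqrt (p - 2) := by
        rw [rr, if_neg hq1, hqq]; ring
      rw [hrq, hrp, Real.sq_sqrt (by linarith)]
    · -- q = p - 2
      right; right
      have hqq : q = p - 2 := by simpa [f₂, hp1] using hq
      have hq1 : q ≤ 1 := by rw [hqq]; linarith
      rw [rr, if_pos hq1, hqq, hrp]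

lemma key_lemma {x : ℕ → ℝ} (hx : x ∈ MahavierPlus Frel) (n : ℕ) :
    ∃ a b : ℕ, (rr (x n)) ^ (2 ^ a) = (rr (x 0)) ^ (2 ^ b) := by
  induction n with
  | zero => exact ⟨0, 0, rfl⟩
  | succ n ih =>
    obtain ⟨a, b, hab⟩ := ih
    rcases rr_step (hx n) with h | h | h
    · -- rr x(n+1) = (rr x n)^2
      refine ⟨a, b + 1, ?_⟩
      rw [h, ← pow_mul, show 2 * 2 ^ a = 2 ^ a * 2 by ring, pow_mul, hab,
        ← pow_mul, ← pow_succ]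
    · -- rr x n = (rr x(n+1))^2
      refine ⟨a + 1, b, ?_⟩
      rw [pow_succ', pow_mul, ← h, hab]
    · rw [h]; exact ⟨a, b, hab⟩

lemma shift_iter (x : ℕ → ℝ) (n i : ℕ) : (shiftMap^[n] x) i = x (i + n) := by
  induction n generalizing x with
  | zero => rfl
  | succ n ih =>
    rw [Function.iterate_succ_apply, ih]
    show x (i + n + 1) = x (i + (n + 1))
    congr 1

/-- No power-of-two relation between values near 0.9 and near 0.5. -/
lemma numeric_contradiction {u v : ℝ} (hu : u ∈ Ioo (0.89 : ℝ) 0.91)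
    (hv : v ∈ Ioo (0.49 : ℝ) 0.51) {a b : ℕ} (h : u ^ (2 ^ a) = v ^ (2 ^ b)) :
    False := by
  obtain ⟨hu1, hu2⟩ := hu
  obtain ⟨hv1, hv2⟩ := hv
  have hu0 : (0:ℝ) ≤ u := by linarith
  have hv0 : (0:ℝ) ≤ v := by linarith
  rcases le_total a b with hab | hab
  · -- u ^ 2^a = (v ^ 2^(b-a)) ^ 2^a, so u = v ^ 2^(b-a) ≤ v < u
    have hb : 2 ^ b = 2 ^ (b - a) * 2 ^ a := by
      rw [← pow_add]; congr 1; omega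
    rw [hb, pow_mul] at h
    have heq : u = v ^ 2 ^ (b - a) :=
      (pow_left_inj₀ hu0 (pow_nonneg hv0 _) (pow_pos (two_pos : (0:ℕ) < 2) a).ne').mp h
    have hle : v ^ 2 ^ (b - a) ≤ v := by
      calc v ^ 2 ^ (b - a) ≤ v ^ 1 :=
        pow_le_pow_of_le_one hv0 (by linarith) (Nat.one_le_two_pow)
      _ = v := pow_one v
    linarith [heq ▸ hle]
  · -- v = u ^ 2^(a-b)
    have ha : 2 ^ a = 2 ^ (a - b) * 2 ^ b := by
      rw [← pow_add]; congr 1; omega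
    rw [ha, pow_mul] at h
    have heq : u ^ 2 ^ (a - b) = v :=
      (pow_left_inj₀ (pow_nonneg hu0 _) hv0 (pow_pos (two_pos : (0:ℕ) < 2) b).ne').mp h
    set c := a - b with hc
    rcases le_or_gt c 2 with hc2 | hc2
    · have h4 : u ^ 4 ≤ u ^ 2 ^ c :=
        pow_le_pow_of_le_one hu0 (by linarith) (by
          calc 2 ^ c ≤ 2 ^ 2 := Nat.pow_le_pow_right (by norm_num) hc2
          _ ≤ 4 := by norm_num)
      have : (0.89:ℝ) ^ 4 < u ^ 4 := by
        apply pow_lt_pow_left₀ hu1 (by norm_num)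
        norm_num
      nlinarith
    · have h8 : u ^ 2 ^ c ≤ u ^ 8 :=
        pow_le_pow_of_le_one hu0 (by linarith) (by
          calc 8 = 2 ^ 3 := by norm_num
          _ ≤ 2 ^ c := Nat.pow_le_pow_right (by norm_num) hc2)
      have : u ^ 8 < (0.91:ℝ) ^ 8 := by
        apply pow_lt_pow_left₀ hu2 hu0
        norm_num
      nlinarith

/-- The Mahavier dynamical system `(X_F^+, σ_F^+)` for the relation
`F = Γ(f₁) ∪ Γ(f₂)` (with the square root on `[2,3]`) is not transitive. -/
theorem mahavier_sqrt_not_transitive :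
    ¬ (∀ U V : Set (ℕ → ℝ), IsOpen U → IsOpen V →
        (U ∩ MahavierPlus Frel).Nonempty → (V ∩ MahavierPlus Frel).Nonempty →
        ∃ n : ℕ, (shiftMap^[n] '' (U ∩ MahavierPlus Frel) ∩
          (V ∩ MahavierPlus Frel)).Nonempty) := by
  intro h
  set U : Set (ℕ → ℝ) := (fun x : ℕ → ℝ => x 0) ⁻¹' Ioo 0.49 0.51 with hU
  set V : Set (ℕ → ℝ) := (fun x : ℕ → ℝ => x 0) ⁻¹' Ioo 0.89 0.91 with hV
  have hUo : IsOpen U := isOpen_Ioo.preimage (continuous_apply 0)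
  have hVo : IsOpen V := isOpen_Ioo.preimage (continuous_apply 0)
  -- a witness sequence oscillating a, a+2, a, a+2, ... via f₂
  have hwit : ∀ a : ℝ, a ∈ Icc (0:ℝ) 1 →
      (fun i : ℕ => if Even i then a else a + 2) ∈ MahavierPlus Frel := by
    intro a ⟨ha0, ha1⟩ i
    rcases Nat.even_or_odd i with he | ho
    · have h1 : ¬ Even (i + 1) := by simp [Nat.even_add_one, he]
      simp only [he, h1, if_true, if_false, Frel, XS, mem_setOf_eq, mem_union, mem_Icc]
      refine ⟨Or.inl ⟨ha0, ha1⟩, Or.inr ?_⟩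
      simp [f₂, ha1]
    · have he : ¬ Even i := Nat.not_even_iff_odd.mpr ho
      have h1 : Even (i + 1) := Nat.even_add_one.mpr he
      simp only [he, h1, if_true, if_false, Frel, XS, mem_setOf_eq, mem_union, mem_Icc]
      refine ⟨Or.inr ⟨by linarith, by linarith⟩, Or.inr ?_⟩
      have : ¬ (a + 2 ≤ 1) := by linarith
      simp [f₂, this]
  have hUne : (U ∩ MahavierPlus Frel).Nonempty := by
    refine ⟨fun i => if Even i then (0.5:ℝ) else 0.5 + 2, ?_, hwit 0.5 (by norm_num)⟩
    simp [hU]; norm_num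
  have hVne : (V ∩ MahavierPlus Frel).Nonempty := by
    refine ⟨fun i => if Even i then (0.9:ℝ) else 0.9 + 2, ?_, hwit 0.9 (by norm_num)⟩
    simp [hV]; norm_num
  obtain ⟨n, y, ⟨⟨x, ⟨hxU, hxM⟩, hxy⟩, hyV, _⟩⟩ := h U V hUo hVo hUne hVne
  have hxn : x n ∈ Ioo (0.89:ℝ) 0.91 := by
    have : y 0 = x n := by rw [← hxy, shift_iter]; norm_num
    rw [← this]; exact hyV
  have hx0 : x 0 ∈ Ioo (0.49:ℝ) 0.51 := hxU
  obtain ⟨a, b, hab⟩ := key_lemma hxM n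
  have hrn : rr (x n) = x n := if_pos (by linarith [hxn.2])
  have hr0 : rr (x 0) = x 0 := if_pos (by linarith [hx0.2])
  rw [hrn, hr0] at hab
  exact numeric_contradiction hxn hx0 hab
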